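/- Let X = [-1,1] with Lebesgue measure and Y = ({0}×[0,1]) ∪ ([0,1]×{1}) ∪ ({1}×[0,1]) ⊂ ℝ² with the Euclidean metric. Define u(x) = (0,0) for −1 ≤ x ≤ 0 and u(x) = (1,0) for 0 < x ≤ 1. Then for any sequence (u_k) in N^{1,1}(X:Y) with u_k → u in L¹, one has liminf_k ∫_X g_{u_k} dL¹ ≥ 14/5 > 1 = ‖D_AM u‖(X). In particular, the relaxed BV energy with respect to N^{1,1}(X:Y) strictly exceeds the AM-BV energy. -/

import Mathlib

open MeasureTheory Filter Set Metric
open scoped ENNReal NNReal Topology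

noncomputable section

namespace BVAMPaper

/-- A nonconstant compact rectifiable curve in `X`, parametrized by arclength on `[0, len]`. -/
structure Curve (X : Type*) [MetricSpace X] : Type _ where
  len : ℝ
  len_pos : 0 < len
  toFun : ℝ → X
  lip : LipschitzOnWith 1 toFun (Set.Icc 0 len)
  nonconst : ∃ s ∈ Set.Icc (0:ℝ) len, ∃ t ∈ Set.Icc (0:ℝ) len, toFun s ≠ toFun t

variable {X : Type*} [MetricSpace X]

/-- The line integral `∫_γ ρ ds` of `ρ` over the arclength-parametrized curve `γ`. -/
def Curve.integral (γ : Curve X) (ρ : X → ℝ≥0∞) : ℝ≥0∞ :=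
  ∫⁻ t in Set.Icc 0 γ.len, ρ (γ.toFun t)

/-- The line integral of `ρ` over the subcurve `γ|_{[s,t]}`. -/
def Curve.integralOn (γ : Curve X) (s t : ℝ) (ρ : X → ℝ≥0∞) : ℝ≥0∞ :=
  ∫⁻ r in Set.Icc s t, ρ (γ.toFun r)

variable [MeasurableSpace X]

/-- The 1-modulus of a family of curves. -/
def Mod1 (μ : Measure X) (Γ : Set (Curve X)) : ℝ≥0∞ :=
  ⨅ (ρ : X → ℝ≥0∞) (_ : Measurable ρ ∧ ∀ γ ∈ Γ, 1 ≤ Curve.integral γ ρ), ∫⁻ x, ρ x ∂μ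

/-- A sequence admissible for the AM-modulus of `Γ`. -/
def AMAdmissible (Γ : Set (Curve X)) (ρ : ℕ → X → ℝ≥0∞) : Prop :=
  (∀ i, Measurable (ρ i)) ∧
    ∀ γ ∈ Γ, 1 ≤ Filter.atTop.liminf fun i => Curve.integral γ (ρ i)

/-- The AM-modulus of a family of curves. -/
def AM (μ : Measure X) (Γ : Set (Curve X)) : ℝ≥0∞ :=
  ⨅ (ρ : ℕ → X → ℝ≥0∞) (_ : AMAdmissible Γ ρ),
    Filter.atTop.liminf fun i => ∫⁻ x, ρ i x ∂μ

section Target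
variable {Y : Type*} [EMetricSpace Y]

/-- `g` is an upper gradient of `u`. -/
def IsUpperGradient (u : X → Y) (g : X → ℝ≥0∞) : Prop :=
  ∀ γ : Curve X, edist (u (γ.toFun γ.len)) (u (γ.toFun 0)) ≤ Curve.integral γ g

/-- `(ρ i)` is an AM-bounding sequence for `u` relative to the set `U`. -/
def AMBoundingOn (μ : Measure X) (U : Set X) (u : X → Y) (ρ : ℕ → X → ℝ≥0∞) : Prop :=
  (∀ i, Measurable (ρ i)) ∧
    ∃ Γ : Set (Curve X), AM μ Γ = 0 ∧
      ∀ γ : Curve X, γ ∉ Γ → (∀ r ∈ Set.Icc (0:ℝ) γ.len, γ.toFun r ∈ U) →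
        ∃ N : Set ℝ, volume N = 0 ∧
          ∀ s t : ℝ, s ∈ Set.Icc (0:ℝ) γ.len → t ∈ Set.Icc (0:ℝ) γ.len →
            s ∉ N → t ∉ N → s < t →
              edist (u (γ.toFun s)) (u (γ.toFun t)) ≤
                Filter.atTop.liminf fun i => Curve.integralOn γ s t (ρ i)

/-- `(ρ i)` is an AM-bounding sequence for `u`. -/
def AMBounding (μ : Measure X) (u : X → Y) (ρ : ℕ → X → ℝ≥0∞) : Prop :=
  AMBoundingOn μ Set.univ u ρ

/-- A strong bounding sequence: the bounding inequality holds along every nonconstant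
compact rectifiable curve, with no exceptional curve family. -/
def StrongBounding (u : X → Y) (ρ : ℕ → X → ℝ≥0∞) : Prop :=
  (∀ i, Measurable (ρ i)) ∧
    ∀ γ : Curve X, ∃ N : Set ℝ, volume N = 0 ∧
      ∀ s t : ℝ, s ∈ Set.Icc (0:ℝ) γ.len → t ∈ Set.Icc (0:ℝ) γ.len →
        s ∉ N → t ∉ N → s < t →
          edist (u (γ.toFun s)) (u (γ.toFun t)) ≤
            Filter.atTop.liminf fun i => Curve.integralOn γ s t (ρ i)

/-- The AM-BV energy of `u` relative to the set `U`. -/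
def DAMOn (μ : Measure X) (u : X → Y) (U : Set X) : ℝ≥0∞ :=
  ⨅ (ρ : ℕ → X → ℝ≥0∞) (_ : AMBoundingOn μ U u ρ),
    Filter.atTop.liminf fun i => ∫⁻ x in U, ρ i x ∂μ

/-- The total AM-BV energy `‖D_AM u‖(X)`. -/
def DAM (μ : Measure X) (u : X → Y) : ℝ≥0∞ := DAMOn μ u Set.univ

/-- `‖D_AM u‖(A)` for a general set `A`, via approximation by open supersets. -/
def DAMmeas (μ : Measure X) (u : X → Y) (A : Set X) : ℝ≥0∞ :=
  ⨅ (U : Set X) (_ : IsOpen U ∧ A ⊆ U), DAMOn μ u U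

/-- `u ∈ L¹(X : Y)`. -/
def MemL1 (μ : Measure X) (u : X → Y) : Prop :=
  AEStronglyMeasurable u μ ∧ ∃ y₀ : Y, ∫⁻ x, edist (u x) y₀ ∂μ < ∞

/-- `u ∈ BV_AM(X : Y)`. -/
def MemBVAM (μ : Measure X) (u : X → Y) : Prop :=
  MemL1 μ u ∧ ∃ ρ : ℕ → X → ℝ≥0∞, AMBounding μ u ρ ∧
    (Filter.atTop.liminf fun i => ∫⁻ x, ρ i x ∂μ) < ∞

/-- `u ∈ N^{1,1}(X : Y)`. -/
def MemN11 (μ : Measure X) (u : X → Y) : Prop :=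
  MemL1 μ u ∧ ∃ g : X → ℝ≥0∞, Measurable g ∧ IsUpperGradient u g ∧ ∫⁻ x, g x ∂μ < ∞

/-- The relaxed BV energy `‖Du‖(X)` of `u`, via approximation in `L¹` by
Newton–Sobolev maps with their upper gradients. -/
def DBV (μ : Measure X) (u : X → Y) : ℝ≥0∞ :=
  ⨅ (v : ℕ → X → Y) (g : ℕ → X → ℝ≥0∞)
    (_ : (∀ k, MemL1 μ (v k) ∧ Measurable (g k) ∧ IsUpperGradient (v k) (g k)) ∧
        Tendsto (fun k => ∫⁻ x, edist (v k x) (u x) ∂μ) atTop (nhds 0)),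
    Filter.atTop.liminf fun k => ∫⁻ x, g k x ∂μ

/-- `u ∈ BV(X : Y)` via relaxation. -/
def MemBV (μ : Measure X) (u : X → Y) : Prop := MemL1 μ u ∧ DBV μ u < ∞

/-- The pointwise (upper) Lipschitz constant function. -/
def lipDeriv (u : X → Y) (x : X) : ℝ≥0∞ :=
  Filter.limsup (fun y => edist (u y) (u x) / edist y x) (𝓝[≠] x)

end Target

/-- `μ` is a doubling measure with constant `Cd`. -/
def Doubling (μ : Measure X) (Cd : ℝ≥0) : Prop :=
  ∀ (x : X) (r : ℝ), 0 < r →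
    0 < μ (ball x r) ∧ μ (ball x (2 * r)) ≤ Cd * μ (ball x r) ∧ μ (ball x (2 * r)) < ∞

/-- `X` supports a 1-Poincaré inequality with constants `C`, `lam`. -/
def Poincare (μ : Measure X) (C lam : ℝ) : Prop :=
  ∀ (f : X → ℝ) (g : X → ℝ≥0∞), LocallyIntegrable f μ → Measurable g → IsUpperGradient f g →
    ∀ (x : X) (r : ℝ), 0 < r →
      (μ (ball x r))⁻¹ * ∫⁻ y in ball x r, (‖f y - ⨍ z in ball x r, f z ∂μ‖₊ : ℝ≥0∞) ∂μ ≤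
        ENNReal.ofReal (C * r) *
          ((μ (ball x (lam * r)))⁻¹ * ∫⁻ y in ball x (lam * r), g y ∂μ)

/-- `X` supports an AM-Poincaré inequality for `V`-valued maps. -/
def AMPoincare (μ : Measure X) (V : Type*) [NormedAddCommGroup V] [NormedSpace ℝ V]
    (C lam : ℝ) : Prop :=
  ∀ (u : X → V) (ρ : ℕ → X → ℝ≥0∞), MemBVAM μ u → AMBounding μ u ρ →
    ∀ (x : X) (r : ℝ), 0 < r →
      (μ (ball x r))⁻¹ * ∫⁻ y in ball x r, (‖u y - ⨍ z in ball x r, u z ∂μ‖₊ : ℝ≥0∞) ∂μ ≤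
        ENNReal.ofReal (C * r) *
          Filter.atTop.liminf fun i =>
            (μ (ball x (lam * r)))⁻¹ * ∫⁻ y in ball x (lam * r), ρ i y ∂μ

section MetricTarget
variable {Y : Type*} [MetricSpace Y]

/-- `u` is approximately continuous at `x`. -/
def ApproxCont (μ : Measure X) (u : X → Y) (x : X) : Prop :=
  ∃ y : Y, ∀ ε : ℝ, 0 < ε →
    Filter.limsup (fun r => μ (ball x r \ u ⁻¹' ball y ε) / μ (ball x r)) (𝓝[>] (0:ℝ)) = 0

/-- The jump set of `u`: points where `u` fails to be approximately continuous. -/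
def jumpSet (μ : Measure X) (u : X → Y) : Set X := {x | ¬ ApproxCont μ u x}

end MetricTarget

/-- The codimension-one Hausdorff measure of `A` relative to `μ`. -/
def codimOne (μ : Measure X) (A : Set X) : ℝ≥0∞ :=
  ⨆ (δ : ℝ) (_ : 0 < δ),
    ⨅ (c : ℕ → X) (r : ℕ → ℝ)
      (_ : (∀ i, 0 < r i ∧ r i ≤ δ) ∧ A ⊆ ⋃ i, ball (c i) (r i)),
      ∑' i, μ (ball (c i) (r i)) / ENNReal.ofReal (r i)


/-- The domain `[-1,1]` with Lebesgue measure. -/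
def I14 : Type := Set.Icc (-1 : ℝ) 1

instance : MetricSpace I14 := by unfold I14; infer_instance
instance : MeasurableSpace I14 := by unfold I14; infer_instance

def μ14 : Measure I14 := Measure.comap Subtype.val volume

/-- The "staple" target set
`({0}×[0,1]) ∪ ([0,1]×{1}) ∪ ({1}×[0,1]) ⊂ ℝ²` with the Euclidean metric. -/
def S14 : Set (EuclideanSpace ℝ (Fin 2)) :=
  {p | (p 0 = 0 ∧ p 1 ∈ Set.Icc (0:ℝ) 1) ∨ (p 1 = 1 ∧ p 0 ∈ Set.Icc (0:ℝ) 1) ∨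
       (p 0 = 1 ∧ p 1 ∈ Set.Icc (0:ℝ) 1)}

def Y14 : Type := S14

instance : MetricSpace Y14 := by unfold Y14; infer_instance

lemma mem00 : (0 : EuclideanSpace ℝ (Fin 2)) ∈ S14 := by
  left; constructor <;> simp [S14]

lemma mem10 : (EuclideanSpace.single (0 : Fin 2) (1:ℝ)) ∈ S14 := by
  right; right
  constructor
  · simp [EuclideanSpace.single_apply]
  · simp [EuclideanSpace.single_apply]

/-- `u(x) = (0,0)` for `-1 ≤ x ≤ 0` and `u(x) = (1,0)` for `0 < x ≤ 1`. -/
def u14 : I14 → Y14 := fun x =>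
  if (show Set.Icc (-1:ℝ) 1 from x).1 ≤ 0 then ⟨0, mem00⟩
  else ⟨EuclideanSpace.single (0 : Fin 2) (1:ℝ), mem10⟩


/-! ### Auxiliary infrastructure -/

lemma neg_one_le_one' : (-1:ℝ) ≤ 1 := by norm_num

/-- Clamp a real number into `I14`. -/
def toI (r : ℝ) : I14 := Set.projIcc (-1) 1 neg_one_le_one' r

lemma toI_lip : LipschitzWith 1 toI := LipschitzWith.projIcc neg_one_le_one'

lemma toI_of_mem {r : ℝ} (h : r ∈ Set.Icc (-1:ℝ) 1) : toI r = ⟨r, h⟩ :=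
  Set.projIcc_of_mem _ h

/-- Extend a function on `I14` by zero to all of `ℝ`. -/
def extg (g : I14 → ℝ≥0∞) : ℝ → ℝ≥0∞ := fun r =>
  if h : r ∈ Set.Icc (-1:ℝ) 1 then g ⟨r, h⟩ else 0

lemma extg_apply (g : I14 → ℝ≥0∞) {r : ℝ} (h : r ∈ Set.Icc (-1:ℝ) 1) :
    extg g r = g ⟨r, h⟩ := dif_pos h

lemma lintegral_μ14 (g : I14 → ℝ≥0∞) :
    ∫⁻ x, g x ∂μ14 = ∫⁻ r in Set.Icc (-1:ℝ) 1, extg g r := by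
  have h1 : ∀ x : Set.Icc (-1:ℝ) 1, g x = extg g x.1 := by
    intro x
    rw [extg_apply g x.2]
  calc ∫⁻ x, g x ∂μ14 = ∫⁻ x : Set.Icc (-1:ℝ) 1, extg g x.1 ∂(volume.comap Subtype.val) :=
        lintegral_congr h1
    _ = ∫⁻ r in Set.Icc (-1:ℝ) 1, extg g r := lintegral_subtype_comap measurableSet_Icc _

lemma μ14_apply (s : Set I14) : μ14 s = volume (Subtype.val '' s) :=
  (MeasurableEmbedding.subtype_coe measurableSet_Icc).comap_apply _ _

/-- The straight curve from `a` to `b` inside `I14`. -/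
def seg (a b : ℝ) (ha : -1 ≤ a) (hb : b ≤ 1) (hab : a < b) : Curve I14 where
  len := b - a
  len_pos := sub_pos.2 hab
  toFun := fun r => toI (a + r)
  lip := by
    have h : LipschitzWith 1 fun r => toI (a + r) := by
      simpa [Function.comp_def] using toI_lip.comp (isometry_add_left a).lipschitz
    exact h.lipschitzOnWith
  nonconst := by
    refine ⟨0, ⟨le_refl 0, by linarith⟩, b - a, ⟨by linarith, le_refl _⟩, ?_⟩
    have hma : a ∈ Set.Icc (-1:ℝ) 1 := ⟨ha, by linarith⟩
    have hmb : b ∈ Set.Icc (-1:ℝ) 1 := ⟨by linarith, hb⟩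
    have e0 : toI (a + 0) = ⟨a, hma⟩ := by rw [add_zero]; exact toI_of_mem hma
    have e1 : toI (a + (b - a)) = ⟨b, hmb⟩ := by rw [add_sub_cancel]; exact toI_of_mem hmb
    show toI (a + 0) ≠ toI (a + (b - a))
    rw [e0, e1]
    intro h
    exact absurd (congrArg Subtype.val h) (by simpa using ne_of_lt hab)

lemma lint_shift (F : ℝ → ℝ≥0∞) (a s t : ℝ) :
    ∫⁻ r in Set.Icc s t, F (a + r) = ∫⁻ r in Set.Icc (a+s) (a+t), F r := by
  have h1 := (measurePreserving_add_left volume a).setLIntegral_comp_preimage_emb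
      (MeasurableEquiv.addLeft a).measurableEmbedding F (Set.Icc (a+s) (a+t))
  have hset : ((a + ·) ⁻¹' Set.Icc (a+s) (a+t)) = Set.Icc s t := by
    ext r
    simp only [Set.mem_preimage, Set.mem_Icc]
    constructor
    · rintro ⟨h2, h3⟩; exact ⟨by linarith, by linarith⟩
    · rintro ⟨h2, h3⟩; exact ⟨by linarith, by linarith⟩
  rw [← h1, hset]

lemma seg_intOn (a b : ℝ) (ha : -1 ≤ a) (hb : b ≤ 1) (hab : a < b) (ρ : I14 → ℝ≥0∞)
    {s t : ℝ} (hs : 0 ≤ s) (ht : t ≤ b - a) :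
    Curve.integralOn (seg a b ha hb hab) s t ρ = ∫⁻ r in Set.Icc (a+s) (a+t), extg ρ r := by
  rw [Curve.integralOn, ← lint_shift (extg ρ) a s t]
  apply setLIntegral_congr_fun measurableSet_Icc
  intro r hr
  dsimp only
  have hmem : a + r ∈ Set.Icc (-1:ℝ) 1 :=
    ⟨by have := hr.1; linarith, by have := hr.2; linarith⟩
  show ρ (toI (a + r)) = _
  rw [toI_of_mem hmem, extg_apply ρ hmem]

lemma seg_int (a b : ℝ) (ha : -1 ≤ a) (hb : b ≤ 1) (hab : a < b) (ρ : I14 → ℝ≥0∞) :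
    Curve.integral (seg a b ha hb hab) ρ = ∫⁻ r in Set.Icc a b, extg ρ r := by
  have h := seg_intOn a b ha hb hab ρ (s := 0) (t := b - a) le_rfl le_rfl
  rw [add_zero, add_sub_cancel] at h
  exact h

lemma ug_pair {v : I14 → Y14} {g : I14 → ℝ≥0∞} (hug : IsUpperGradient v g)
    {a b : ℝ} (hab : a < b)
    (hma : a ∈ Set.Icc (-1:ℝ) 1) (hmb : b ∈ Set.Icc (-1:ℝ) 1) :
    edist (v ⟨b, hmb⟩) (v ⟨a, hma⟩) ≤ ∫⁻ r in Set.Icc a b, extg g r := by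
  have ha : (-1:ℝ) ≤ a := hma.1
  have hb : b ≤ 1 := hmb.2
  have h := hug (seg a b ha hb hab)
  have e1 : (seg a b ha hb hab).toFun (seg a b ha hb hab).len = ⟨b, hmb⟩ := by
    show toI (a + (b - a)) = _
    rw [add_sub_cancel]; exact toI_of_mem hmb
  have e0 : (seg a b ha hb hab).toFun 0 = ⟨a, hma⟩ := by
    show toI (a + 0) = _
    rw [add_zero]; exact toI_of_mem hma
  rwa [e1, e0, seg_int] at h

/-- The empty curve family has zero AM-modulus. -/
lemma AM_empty {X : Type*} [MetricSpace X] [MeasurableSpace X] (μ : Measure X) :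
    AM μ (∅ : Set (Curve X)) = 0 := by
  refine le_antisymm ?_ zero_le
  refine iInf_le_of_le (fun _ _ => 0) (iInf_le_of_le
    ⟨fun _ => measurable_const, fun γ hγ => absurd hγ (Set.notMem_empty γ)⟩ ?_)
  simp [Filter.liminf_const]

/-- The underlying point of an element of `Y14`. -/
def pt (y : Y14) : EuclideanSpace ℝ (Fin 2) := Subtype.val (show S14 from y)

lemma pt_mem (y : Y14) : pt y ∈ S14 := (show S14 from y).2

lemma edist_Y14 (y z : Y14) : edist y z = ENNReal.ofReal (dist (pt y) (pt z)) := by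
  have h : edist y z = edist (pt y) (pt z) := rfl
  rw [h, edist_dist]

lemma coord_le_dist (x y : EuclideanSpace ℝ (Fin 2)) (i : Fin 2) :
    |x i - y i| ≤ dist x y := by
  rw [EuclideanSpace.dist_eq]
  have h1 : |x i - y i| = Real.sqrt (dist (x i) (y i) ^ 2) := by
    rw [Real.dist_eq, Real.sqrt_sq_eq_abs, abs_abs]
  rw [h1]
  apply Real.sqrt_le_sqrt
  exact Finset.single_le_sum (f := fun j => dist (x j) (y j) ^ 2)
    (fun j _ => sq_nonneg _) (Finset.mem_univ i)

lemma lip_eval (i : Fin 2) : LipschitzWith 1 (fun p : EuclideanSpace ℝ (Fin 2) => p i) := by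
  apply LipschitzWith.of_dist_le_mul
  intro p q
  simpa [Real.dist_eq] using coord_le_dist p q i

lemma S14_coords {p : EuclideanSpace ℝ (Fin 2)} (hp : p ∈ S14) :
    p 0 ∈ Set.Icc (0:ℝ) 1 ∧ p 1 ∈ Set.Icc (0:ℝ) 1 := by
  rcases hp with ⟨h0, h1⟩ | ⟨h1, h0⟩ | ⟨h0, h1⟩
  · exact ⟨by rw [h0]; exact ⟨le_refl _, by norm_num⟩, h1⟩
  · exact ⟨h0, by rw [h1]; exact ⟨by norm_num, le_refl _⟩⟩
  · exact ⟨by rw [h0]; exact ⟨by norm_num, le_refl _⟩, h1⟩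


/-! ### A crossing lemma for real functions -/

lemma cross_real {f : ℝ → ℝ} {s t ε : ℝ} (hst : s < t) (hf : ContinuousOn f (Set.Icc s t))
    (hlip : ∀ x ∈ Set.Icc s t, ∀ y ∈ Set.Icc s t, |f x - f y| ≤ |x - y|)
    (hε : 0 < ε) (h0 : f s ≤ 0) (h1 : ε ≤ f t) :
    ∃ r0 r1, s ≤ r0 ∧ r0 < r1 ∧ r1 ≤ t ∧ ε ≤ r1 - r0 ∧
      ∀ r ∈ Set.Ioo r0 r1, 0 < f r ∧ f r < ε := by
  have hS : IsClosed (Set.Icc s t ∩ f ⁻¹' Set.Iic 0) :=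
    hf.preimage_isClosed_of_isClosed isClosed_Icc isClosed_Iic
  have hScpt : IsCompact (Set.Icc s t ∩ f ⁻¹' Set.Iic 0) :=
    isCompact_Icc.of_isClosed_subset hS Set.inter_subset_left
  have hSne : (Set.Icc s t ∩ f ⁻¹' Set.Iic 0).Nonempty :=
    ⟨s, ⟨le_refl s, le_of_lt hst⟩, h0⟩
  set r0 := sSup (Set.Icc s t ∩ f ⁻¹' Set.Iic 0) with hr0def
  have hr0 : r0 ∈ Set.Icc s t ∩ f ⁻¹' Set.Iic 0 := hScpt.sSup_mem hSne
  obtain ⟨⟨hr0s, hr0t⟩, hr0f⟩ := hr0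
  have hsub : Set.Icc r0 t ⊆ Set.Icc s t := Set.Icc_subset_Icc hr0s (le_refl t)
  have hT : IsClosed (Set.Icc r0 t ∩ f ⁻¹' Set.Ici ε) :=
    (hf.mono hsub).preimage_isClosed_of_isClosed isClosed_Icc isClosed_Ici
  have hTcpt : IsCompact (Set.Icc r0 t ∩ f ⁻¹' Set.Ici ε) :=
    isCompact_Icc.of_isClosed_subset hT Set.inter_subset_left
  have hTne : (Set.Icc r0 t ∩ f ⁻¹' Set.Ici ε).Nonempty := ⟨t, ⟨hr0t, le_refl t⟩, h1⟩
  set r1 := sInf (Set.Icc r0 t ∩ f ⁻¹' Set.Ici ε) with hr1def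
  have hr1 : r1 ∈ Set.Icc r0 t ∩ f ⁻¹' Set.Ici ε := hTcpt.sInf_mem hTne
  obtain ⟨⟨hr10, hr1t⟩, hr1f⟩ := hr1
  have hr1f' : ε ≤ f r1 := hr1f
  have hr0f' : f r0 ≤ 0 := hr0f
  have hgap : ε ≤ r1 - r0 := by
    have h2 := hlip r1 ⟨le_trans hr0s hr10, hr1t⟩ r0 ⟨hr0s, hr0t⟩
    have h4 : |r1 - r0| = r1 - r0 := abs_of_nonneg (by linarith)
    calc ε ≤ f r1 - f r0 := by linarith
      _ ≤ |f r1 - f r0| := le_abs_self _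
      _ ≤ |r1 - r0| := h2
      _ = r1 - r0 := h4
  refine ⟨r0, r1, hr0s, by linarith, hr1t, hgap, ?_⟩
  rintro r ⟨hra, hrb⟩
  constructor
  · by_contra hle
    push_neg at hle
    have hmem : r ∈ Set.Icc s t ∩ f ⁻¹' Set.Iic 0 :=
      ⟨⟨le_trans hr0s (le_of_lt hra), le_trans (le_of_lt hrb) hr1t⟩, hle⟩
    have := le_csSup hScpt.bddAbove hmem
    rw [← hr0def] at this
    linarith
  · by_contra hge
    push_neg at hge
    have hmem : r ∈ Set.Icc r0 t ∩ f ⁻¹' Set.Ici ε :=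
      ⟨⟨le_of_lt hra, le_trans (le_of_lt hrb) hr1t⟩, hge⟩
    have := csInf_le hTcpt.bddBelow hmem
    rw [← hr1def] at this
    linarith

lemma cross_real' {f : ℝ → ℝ} {s t ε : ℝ} (hst : s < t) (hf : ContinuousOn f (Set.Icc s t))
    (hlip : ∀ x ∈ Set.Icc s t, ∀ y ∈ Set.Icc s t, |f x - f y| ≤ |x - y|)
    (hε : 0 < ε) (h' : (f s ≤ 0 ∧ ε ≤ f t) ∨ (f t ≤ 0 ∧ ε ≤ f s)) :
    ∃ r0 r1, s ≤ r0 ∧ r0 < r1 ∧ r1 ≤ t ∧ ε ≤ r1 - r0 ∧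
      ∀ r ∈ Set.Ioo r0 r1, 0 < f r ∧ f r < ε := by
  rcases h' with ⟨h0, h1⟩ | ⟨h0, h1⟩
  · exact cross_real hst hf hlip hε h0 h1
  · set g : ℝ → ℝ := fun r => f (s + t - r) with hg
    have hmap : ∀ r ∈ Set.Icc s t, s + t - r ∈ Set.Icc s t := fun r hr =>
      ⟨by have := hr.2; linarith, by have := hr.1; linarith⟩
    have hgc : ContinuousOn g (Set.Icc s t) :=
      hf.comp (Continuous.continuousOn (by continuity)) hmap
    have hglip : ∀ x ∈ Set.Icc s t, ∀ y ∈ Set.Icc s t, |g x - g y| ≤ |x - y| := by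
      intro x hx y hy
      have h2 := hlip _ (hmap x hx) _ (hmap y hy)
      calc |g x - g y| ≤ |(s + t - x) - (s + t - y)| := h2
        _ = |y - x| := by ring_nf
        _ = |x - y| := abs_sub_comm _ _
    have hgs : g s ≤ 0 := by
      have : s + t - s = t := by ring
      rw [hg]; simpa [this] using h0
    have hgt : ε ≤ g t := by
      have : s + t - t = s := by ring
      rw [hg]; simpa [this] using h1
    obtain ⟨q0, q1, hq0, hq01, hq1, hgap, hmid⟩ := cross_real hst hgc hglip hε hgs hgt
    refine ⟨s + t - q1, s + t - q0, by linarith, by linarith, by linarith, by linarith, ?_⟩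
    intro r hr
    have hmem : s + t - r ∈ Set.Ioo q0 q1 := ⟨by have := hr.2; linarith, by have := hr.1; linarith⟩
    have h2 := hmid _ hmem
    have h3 : g (s + t - r) = f r := by rw [hg]; simp [sub_sub_cancel]
    rwa [h3] at h2

/-! ### Curves in `I14` -/

lemma curve_coord (γ : Curve I14) {s t : ℝ} (hsub : Set.Icc s t ⊆ Set.Icc 0 γ.len) :
    (∀ x ∈ Set.Icc s t, ∀ y ∈ Set.Icc s t,
        |(γ.toFun x).1 - (γ.toFun y).1| ≤ |x - y|) ∧
      ContinuousOn (fun r => (γ.toFun r).1) (Set.Icc s t) := by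
  have hl : LipschitzOnWith 1 (fun r => (γ.toFun r).1) (Set.Icc s t) := by
    intro x hx y hy
    have h2 := γ.lip (hsub hx) (hsub hy)
    calc edist ((fun r => (γ.toFun r).1) x) ((fun r => (γ.toFun r).1) y)
        = edist (γ.toFun x) (γ.toFun y) := rfl
      _ ≤ 1 * edist x y := h2
  constructor
  · intro x hx y hy
    have h2 := hl.dist_le_mul x hx y hy
    simpa [Real.dist_eq] using h2
  · exact hl.continuousOn

lemma u14_of_nonpos {x : I14} (h : x.1 ≤ 0) : u14 x = ⟨0, mem00⟩ := if_pos h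

lemma u14_of_pos {x : I14} (h : 0 < x.1) :
    u14 x = ⟨EuclideanSpace.single (0 : Fin 2) (1:ℝ), mem10⟩ := if_neg (not_le.2 h)

lemma edist_y0y1 :
    edist (⟨0, mem00⟩ : Y14) (⟨EuclideanSpace.single (0 : Fin 2) (1:ℝ), mem10⟩ : Y14) = 1 := by
  erw [edist_Y14]
  have h : dist (pt ⟨0, mem00⟩) (pt ⟨EuclideanSpace.single (0 : Fin 2) (1:ℝ), mem10⟩) = 1 := by
    show dist (0 : EuclideanSpace ℝ (Fin 2)) (EuclideanSpace.single (0 : Fin 2) (1:ℝ)) = 1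
    rw [dist_zero_left, EuclideanSpace.norm_single]
    norm_num
  rw [h, ENNReal.ofReal_one]

/-! ### The optimal AM-bounding sequence for `u14` -/

/-- The canonical AM-bounding sequence for `u14`. -/
def ρ14 : ℕ → I14 → ℝ≥0∞ := fun i x =>
  if 0 < x.1 ∧ x.1 < 1/((i:ℝ)+1) then ENNReal.ofReal ((i:ℝ)+1) else 0

lemma ρ14_meas (i : ℕ) : Measurable (ρ14 i) := by
  have hset : MeasurableSet {x : I14 | 0 < x.1 ∧ x.1 < 1/((i:ℝ)+1)} := by
    have : {x : I14 | 0 < x.1 ∧ x.1 < 1/((i:ℝ)+1)}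
        = (Subtype.val : I14 → ℝ) ⁻¹' (Set.Ioo 0 (1/((i:ℝ)+1))) := rfl
    rw [this]
    exact measurable_subtype_coe measurableSet_Ioo
  exact Measurable.ite hset measurable_const measurable_const

lemma ρ14_lintegral (i : ℕ) : ∫⁻ x, ρ14 i x ∂μ14 = 1 := by
  have hset : MeasurableSet {x : I14 | 0 < x.1 ∧ x.1 < 1/((i:ℝ)+1)} := by
    have : {x : I14 | 0 < x.1 ∧ x.1 < 1/((i:ℝ)+1)}
        = (Subtype.val : I14 → ℝ) ⁻¹' (Set.Ioo 0 (1/((i:ℝ)+1))) := rfl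
    rw [this]
    exact measurable_subtype_coe measurableSet_Ioo
  have hρ : ρ14 i = Set.indicator {x : I14 | 0 < x.1 ∧ x.1 < 1/((i:ℝ)+1)}
      (fun _ => ENNReal.ofReal ((i:ℝ)+1)) := by
    funext x
    rw [Set.indicator_apply]
    rfl
  have hpos : (0:ℝ) < (i:ℝ) + 1 := by positivity
  have himg : Subtype.val '' {x : I14 | 0 < x.1 ∧ x.1 < 1/((i:ℝ)+1)}
      = Set.Ioo (0:ℝ) (1/((i:ℝ)+1)) := by
    ext r
    constructor
    · rintro ⟨x, hx, rfl⟩; exact hx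
    · rintro ⟨h1, h2⟩
      have hle : 1/((i:ℝ)+1) ≤ 1 := by
        rw [div_le_one hpos]
        simp
      exact ⟨⟨r, ⟨by linarith, by linarith⟩⟩, ⟨h1, h2⟩, rfl⟩
  rw [hρ, lintegral_indicator hset, setLIntegral_const, μ14_apply]; erw [himg]; rw [Real.volume_Ioo]
  rw [← ENNReal.ofReal_mul (le_of_lt hpos)]
  rw [sub_zero, mul_one_div_cancel (ne_of_gt hpos), ENNReal.ofReal_one]

lemma liminf_cross {γ : Curve I14} {s t : ℝ} (hsm : s ∈ Set.Icc 0 γ.len)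
    (htm : t ∈ Set.Icc 0 γ.len) (hst : s < t)
    (hcross : ((γ.toFun s).1 ≤ 0 ∧ 0 < (γ.toFun t).1) ∨
      ((γ.toFun t).1 ≤ 0 ∧ 0 < (γ.toFun s).1)) :
    (1:ℝ≥0∞) ≤ Filter.atTop.liminf fun i => Curve.integralOn γ s t (ρ14 i) := by
  have hsub : Set.Icc s t ⊆ Set.Icc 0 γ.len := Set.Icc_subset_Icc hsm.1 htm.2
  obtain ⟨hlip, hcont⟩ := curve_coord γ hsub
  have hbpos : 0 < max (γ.toFun s).1 (γ.toFun t).1 := by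
    rcases hcross with ⟨_, h⟩ | ⟨_, h⟩
    · exact lt_max_of_lt_right h
    · exact lt_max_of_lt_left h
  obtain ⟨n, hn⟩ := exists_nat_one_div_lt hbpos
  refine Filter.le_liminf_of_le (by isBoundedDefault) ?_
  filter_upwards [Filter.eventually_ge_atTop n] with i hi
  set ε := 1/((i:ℝ)+1) with hεdef
  have hε : 0 < ε := by positivity
  have hεle : ε ≤ 1/((n:ℝ)+1) := by
    apply one_div_le_one_div_of_le (by positivity)
    have : (n:ℝ) ≤ (i:ℝ) := Nat.cast_le.2 hi
    linarith
  have hεb : ε ≤ max (γ.toFun s).1 (γ.toFun t).1 := le_trans hεle (le_of_lt hn)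
  have hcross' : ((γ.toFun s).1 ≤ 0 ∧ ε ≤ (γ.toFun t).1) ∨
      ((γ.toFun t).1 ≤ 0 ∧ ε ≤ (γ.toFun s).1) := by
    rcases hcross with ⟨h1, h2⟩ | ⟨h1, h2⟩
    · left; refine ⟨h1, ?_⟩
      rcases max_cases (γ.toFun s).1 (γ.toFun t).1 with ⟨he, _⟩ | ⟨he, _⟩
      · rw [he] at hεb; linarith
      · rwa [he] at hεb
    · right; refine ⟨h1, ?_⟩
      rcases max_cases (γ.toFun s).1 (γ.toFun t).1 with ⟨he, _⟩ | ⟨he, _⟩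
      · rwa [he] at hεb
      · rw [he] at hεb; linarith
  obtain ⟨r0, r1, hsr0, hr01, hr1t, hgap, hmid⟩ := cross_real' hst hcont hlip hε hcross'
  have hkey : ∫⁻ r in Set.Ioo r0 r1, ρ14 i (γ.toFun r) = ENNReal.ofReal ((i:ℝ)+1) *
      ENNReal.ofReal (r1 - r0) := by
    have hcongr : ∫⁻ r in Set.Ioo r0 r1, ρ14 i (γ.toFun r)
        = ∫⁻ _ in Set.Ioo r0 r1, ENNReal.ofReal ((i:ℝ)+1) := by
      apply setLIntegral_congr_fun measurableSet_Ioo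
      intro r hr
      dsimp only
      have h2 := hmid r hr
      rw [ρ14, if_pos]
      exact ⟨h2.1, h2.2⟩
    rw [hcongr, setLIntegral_const, Real.volume_Ioo]
  have hmono : ∫⁻ r in Set.Ioo r0 r1, ρ14 i (γ.toFun r)
      ≤ Curve.integralOn γ s t (ρ14 i) := by
    rw [Curve.integralOn]
    apply lintegral_mono_set
    intro r hr
    exact ⟨le_trans hsr0 (le_of_lt hr.1), le_trans (le_of_lt hr.2) hr1t⟩
  have hone : (1:ℝ≥0∞) ≤ ENNReal.ofReal ((i:ℝ)+1) * ENNReal.ofReal (r1 - r0) := by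
    have hpos : (0:ℝ) < (i:ℝ)+1 := by positivity
    calc (1:ℝ≥0∞) = ENNReal.ofReal (((i:ℝ)+1) * ε) := by
          rw [hεdef, mul_one_div_cancel (ne_of_gt hpos), ENNReal.ofReal_one]
      _ = ENNReal.ofReal ((i:ℝ)+1) * ENNReal.ofReal ε := ENNReal.ofReal_mul (le_of_lt hpos)
      _ ≤ ENNReal.ofReal ((i:ℝ)+1) * ENNReal.ofReal (r1 - r0) := by
          apply mul_le_mul_right
          exact ENNReal.ofReal_le_ofReal hgap
  calc (1:ℝ≥0∞) ≤ ENNReal.ofReal ((i:ℝ)+1) * ENNReal.ofReal (r1 - r0) := hone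
    _ = ∫⁻ r in Set.Ioo r0 r1, ρ14 i (γ.toFun r) := hkey.symm
    _ ≤ Curve.integralOn γ s t (ρ14 i) := hmono

lemma ρ14_bounding : AMBoundingOn μ14 Set.univ u14 ρ14 := by
  refine ⟨ρ14_meas, ∅, AM_empty μ14, ?_⟩
  intro γ _ _
  refine ⟨∅, measure_empty, ?_⟩
  intro s t hsm htm _ _ hst
  by_cases heq : u14 (γ.toFun s) = u14 (γ.toFun t)
  · rw [heq, edist_self]; exact zero_le
  · have hcross : ((γ.toFun s).1 ≤ 0 ∧ 0 < (γ.toFun t).1) ∨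
        ((γ.toFun t).1 ≤ 0 ∧ 0 < (γ.toFun s).1) := by
      by_cases h1 : (γ.toFun s).1 ≤ 0 <;> by_cases h2 : (γ.toFun t).1 ≤ 0
      · exact absurd (by rw [u14_of_nonpos h1, u14_of_nonpos h2]) heq
      · exact Or.inl ⟨h1, not_le.1 h2⟩
      · exact Or.inr ⟨h2, not_le.1 h1⟩
      · exact absurd (by rw [u14_of_pos (not_le.1 h1), u14_of_pos (not_le.1 h2)]) heq
    have hlim := liminf_cross hsm htm hst hcross
    refine le_trans ?_ hlim
    rcases hcross with ⟨h1, h2⟩ | ⟨h1, h2⟩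
    · rw [u14_of_nonpos h1, u14_of_pos h2]; exact le_of_eq edist_y0y1
    · rw [u14_of_pos h2, u14_of_nonpos h1]; exact (edist_comm _ _).trans_le (le_of_eq edist_y0y1)

lemma DAM_le_one : DAM μ14 u14 ≤ 1 := by
  rw [DAM, DAMOn]
  refine iInf_le_of_le ρ14 (iInf_le_of_le ρ14_bounding ?_)
  have h : (fun i => ∫⁻ x in Set.univ, ρ14 i x ∂μ14) = fun _ => (1:ℝ≥0∞) := by
    funext i
    rw [setLIntegral_univ, ρ14_lintegral]
  rw [h, Filter.liminf_const]

lemma one_le_DAM : (1:ℝ≥0∞) ≤ DAM μ14 u14 := by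
  rw [DAM, DAMOn]
  refine le_iInf fun ρ => le_iInf fun hρ => ?_
  obtain ⟨hmeas, Γ, hΓ0, hbound⟩ := hρ
  have h2 : (-1:ℝ) < 1 := by norm_num
  set γ0 := seg (-1) 1 (le_refl _) (by norm_num) h2 with hγ0
  have hlen : γ0.len = 2 := by rw [hγ0]; show (1:ℝ) - (-1) = 2; norm_num
  have hnot : γ0 ∉ Γ := by
    intro hmem
    have hge : (1:ℝ≥0∞) ≤ AM μ14 Γ := by
      refine le_iInf fun σ => le_iInf fun hσ => ?_
      have h1 := hσ.2 γ0 hmem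
      have h3 : (fun i => Curve.integral γ0 (σ i)) = fun i => ∫⁻ x, σ i x ∂μ14 := by
        funext i
        rw [hγ0, seg_int, ← lintegral_μ14]
      rwa [h3] at h1
    rw [hΓ0] at hge
    exact absurd hge (by norm_num)
  obtain ⟨N, hNnull, hb⟩ := hbound γ0 hnot (fun r _ => Set.mem_univ _)
  have hsne : (Set.Ico (0:ℝ) 1 \ N).Nonempty := by
    by_contra h
    rw [Set.not_nonempty_iff_eq_empty, Set.diff_eq_empty] at h
    have hm := measure_mono (μ := volume) h
    rw [hNnull, Real.volume_Ico] at hm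
    simp at hm
  obtain ⟨sv, hs1, hs2⟩ := hsne
  have htne : (Set.Ioc (1:ℝ) 2 \ N).Nonempty := by
    by_contra h
    rw [Set.not_nonempty_iff_eq_empty, Set.diff_eq_empty] at h
    have hm := measure_mono (μ := volume) h
    rw [hNnull, Real.volume_Ioc] at hm
    simp at hm
  obtain ⟨tv, ht1, ht2⟩ := htne
  have hsm : sv ∈ Set.Icc 0 γ0.len := by
    rw [hlen]; exact ⟨hs1.1, by have := hs1.2; linarith⟩
  have htm : tv ∈ Set.Icc 0 γ0.len := by
    rw [hlen]; exact ⟨by have := ht1.1; linarith, ht1.2⟩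
  have hst : sv < tv := by have := hs1.2; have := ht1.1; linarith
  have key := hb sv tv hsm htm hs2 ht2 hst
  have hmems : -1 + sv ∈ Set.Icc (-1:ℝ) 1 := ⟨by have := hs1.1; linarith, by have := hs1.2; linarith⟩
  have hmemt : -1 + tv ∈ Set.Icc (-1:ℝ) 1 := ⟨by have := ht1.1; linarith, by have := ht1.2; linarith⟩
  have hvs : u14 (γ0.toFun sv) = ⟨0, mem00⟩ := by
    have he : γ0.toFun sv = toI (-1 + sv) := rfl
    rw [he, toI_of_mem hmems]
    exact u14_of_nonpos (by have := hs1.2; show -1 + sv ≤ 0; linarith)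
  have hvt : u14 (γ0.toFun tv) = ⟨EuclideanSpace.single (0 : Fin 2) (1:ℝ), mem10⟩ := by
    have he : γ0.toFun tv = toI (-1 + tv) := rfl
    rw [he, toI_of_mem hmemt]
    exact u14_of_pos (by have := ht1.1; show (0:ℝ) < -1 + tv; linarith)
  rw [hvs, hvt] at key; erw [edist_y0y1] at key
  have h5 : ∀ i, Curve.integralOn γ0 sv tv (ρ i) ≤ ∫⁻ x in Set.univ, ρ i x ∂μ14 := by
    intro i
    rw [hγ0, seg_intOn (-1) 1 (le_refl _) (by norm_num) h2 (ρ i) hs1.1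
      (by show tv ≤ 1 - (-1); have := ht1.2; linarith)]
    rw [setLIntegral_univ, lintegral_μ14]
    exact lintegral_mono_set (Set.Icc_subset_Icc (by have := hs1.1; linarith)
      (by have := ht1.2; linarith))
  exact le_trans key (Filter.liminf_le_liminf (Filter.Eventually.of_forall h5))

lemma DAM_eq_one : DAM μ14 u14 = 1 := le_antisymm DAM_le_one one_le_DAM


/-! ### Part B: the `N^{1,1}` relaxation bound -/

lemma extg_total (g : I14 → ℝ≥0∞) : ∫⁻ r, extg g r ∂volume = ∫⁻ x, g x ∂μ14 := by
  rw [lintegral_μ14]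
  have h : extg g = (Set.Icc (-1:ℝ) 1).indicator (extg g) := by
    funext r
    by_cases hr : r ∈ Set.Icc (-1:ℝ) 1
    · rw [Set.indicator_of_mem hr]
    · rw [Set.indicator_of_notMem hr, extg, dif_neg hr]
  conv_lhs => rw [h]
  rw [lintegral_indicator measurableSet_Icc]

lemma cont_V {v : I14 → Y14} {g : I14 → ℝ≥0∞} (hug : IsUpperGradient v g)
    (hfin : ∫⁻ x, g x ∂μ14 ≠ ⊤) :
    ContinuousOn (fun r => pt (v (toI r))) (Set.Icc (-1:ℝ) 1) := by
  set ν := volume.withDensity (extg g) with hν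
  have hν_univ : ν Set.univ ≠ ⊤ := by
    rw [hν, withDensity_apply _ MeasurableSet.univ, Measure.restrict_univ, extg_total]
    exact hfin
  rw [Metric.continuousOn_iff]
  intro b hbmem ε hε
  have hA : Tendsto (fun n : ℕ => ν (Set.Icc (b - 1/((n:ℝ)+1)) (b + 1/((n:ℝ)+1)))) atTop
      (𝓝 (ν (⋂ n : ℕ, Set.Icc (b - 1/((n:ℝ)+1)) (b + 1/((n:ℝ)+1))))) := by
    apply tendsto_measure_iInter_atTop
    · intro n; exact measurableSet_Icc.nullMeasurableSet
    · intro m n hmn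
      have hle : 1/((n:ℝ)+1) ≤ 1/((m:ℝ)+1) := by
        apply one_div_le_one_div_of_le (by positivity)
        have : (m:ℝ) ≤ (n:ℝ) := Nat.cast_le.2 hmn
        linarith
      exact Set.Icc_subset_Icc (by linarith) (by linarith)
    · exact ⟨0, ne_top_of_le_ne_top hν_univ (measure_mono (Set.subset_univ _))⟩
  have hInter : (⋂ n : ℕ, Set.Icc (b - 1/((n:ℝ)+1)) (b + 1/((n:ℝ)+1))) = {b} := by
    ext r
    simp only [Set.mem_iInter, Set.mem_Icc, Set.mem_singleton_iff]
    constructor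
    · intro h
      by_contra hne
      have habs : 0 < |r - b| := abs_pos.2 (sub_ne_zero.2 hne)
      obtain ⟨n, hn⟩ := exists_nat_one_div_lt habs
      have h1 := (h n).1
      have h2 := (h n).2
      rcases abs_cases (r - b) with ⟨he, _⟩ | ⟨he, _⟩ <;> rw [he] at hn <;> linarith
    · intro h; subst h; intro n
      have : (0:ℝ) < 1/((n:ℝ)+1) := by positivity
      constructor <;> linarith
  have hν_b : ν {b} = 0 :=
    withDensity_absolutelyContinuous volume (extg g) (measure_singleton b)
  rw [hInter, hν_b] at hA
  obtain ⟨n, hn⟩ := (hA.eventually_lt_const (ENNReal.ofReal_pos.2 hε)).exists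
  set δ := 1/((n:ℝ)+1) with hδdef
  have hδ : 0 < δ := by positivity
  refine ⟨δ, hδ, ?_⟩
  intro a hamem hab
  have hab' : |a - b| < δ := by rwa [Real.dist_eq] at hab
  have hbound : ∀ x y : ℝ, ∀ hx : x ∈ Set.Icc (-1:ℝ) 1, ∀ hy : y ∈ Set.Icc (-1:ℝ) 1,
      x < y → Set.Icc x y ⊆ Set.Icc (b - δ) (b + δ) →
      edist (pt (v (toI y))) (pt (v (toI x))) < ENNReal.ofReal ε := by
    intro x y hx hy hxy hsub
    have h1 := ug_pair hug hxy hx hy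
    calc edist (pt (v (toI y))) (pt (v (toI x)))
        = edist (v (toI y)) (v (toI x)) := rfl
      _ = edist (v ⟨y, hy⟩) (v ⟨x, hx⟩) := by rw [toI_of_mem hx, toI_of_mem hy]
      _ ≤ ∫⁻ r in Set.Icc x y, extg g r := h1
      _ = ν (Set.Icc x y) := (withDensity_apply _ measurableSet_Icc).symm
      _ ≤ ν (Set.Icc (b - δ) (b + δ)) := measure_mono hsub
      _ < ENNReal.ofReal ε := hn
  have hdist : edist (pt (v (toI a))) (pt (v (toI b))) < ENNReal.ofReal ε := by
    rcases lt_trichotomy a b with hlt | heq | hgt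
    · have hsub : Set.Icc a b ⊆ Set.Icc (b - δ) (b + δ) := by
        apply Set.Icc_subset_Icc
        · rcases abs_cases (a - b) with ⟨he, _⟩ | ⟨he, _⟩ <;> rw [he] at hab' <;> linarith
        · linarith
      rw [edist_comm]
      exact hbound a b hamem hbmem hlt hsub
    · subst heq; rw [edist_self]; exact ENNReal.ofReal_pos.2 hε
    · have hsub : Set.Icc b a ⊆ Set.Icc (b - δ) (b + δ) := by
        apply Set.Icc_subset_Icc
        · linarith
        · rcases abs_cases (a - b) with ⟨he, _⟩ | ⟨he, _⟩ <;> rw [he] at hab' <;> linarith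
      exact hbound b a hbmem hamem hgt hsub
  rw [edist_dist] at hdist
  exact (ENNReal.ofReal_lt_ofReal_iff hε).1 hdist

lemma exists_close_left {w : I14 → Y14}
    (h : ∫⁻ x, edist (w x) (u14 x) ∂μ14 < ENNReal.ofReal (1/10)) :
    ∃ a : ℝ, ∃ hma : a ∈ Set.Icc (-1:ℝ) 1, a ≤ 0 ∧
      dist (pt (w ⟨a, hma⟩)) 0 ≤ 1/10 := by
  by_contra hc
  push_neg at hc
  have hset : MeasurableSet {x : I14 | x.1 ≤ 0} := by
    have he : {x : I14 | x.1 ≤ 0} = (Subtype.val : I14 → ℝ) ⁻¹' Set.Iic 0 := rfl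
    rw [he]; exact measurable_subtype_coe measurableSet_Iic
  have hub : ∀ x : I14,
      Set.indicator {x : I14 | x.1 ≤ 0} (fun _ => ENNReal.ofReal (1/10)) x
        ≤ edist (w x) (u14 x) := by
    intro x
    by_cases hx : x ∈ {x : I14 | x.1 ≤ 0}
    · rw [Set.indicator_of_mem hx]
      have h2 := hc x.1 x.2 hx
      rw [edist_Y14, u14_of_nonpos hx]
      have h4 : pt (⟨0, mem00⟩ : Y14) = 0 := rfl
      rw [h4]
      exact ENNReal.ofReal_le_ofReal (le_of_lt h2)
    · rw [Set.indicator_of_notMem hx]; exact zero_le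
  have hint := lintegral_mono (μ := μ14) hub
  rw [lintegral_indicator hset, setLIntegral_const] at hint
  have himg : Subtype.val '' {x : I14 | x.1 ≤ 0} = Set.Icc (-1:ℝ) 0 := by
    ext r
    constructor
    · rintro ⟨x, hx, rfl⟩; exact ⟨x.2.1, hx⟩
    · rintro ⟨h1, h2⟩; exact ⟨⟨r, ⟨h1, by linarith⟩⟩, h2, rfl⟩
  have hμ : μ14 {x : I14 | x.1 ≤ 0} = 1 := by
    rw [μ14_apply]; erw [himg]; rw [Real.volume_Icc]
    norm_num
  rw [hμ, mul_one] at hint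
  exact absurd (lt_of_le_of_lt hint h) (lt_irrefl _)

lemma exists_close_right {w : I14 → Y14}
    (h : ∫⁻ x, edist (w x) (u14 x) ∂μ14 < ENNReal.ofReal (1/10)) :
    ∃ b : ℝ, ∃ hmb : b ∈ Set.Icc (-1:ℝ) 1, 0 < b ∧
      dist (pt (w ⟨b, hmb⟩)) (EuclideanSpace.single (0 : Fin 2) (1:ℝ)) ≤ 1/10 := by
  by_contra hc
  push_neg at hc
  have hset : MeasurableSet {x : I14 | 0 < x.1} := by
    have he : {x : I14 | 0 < x.1} = (Subtype.val : I14 → ℝ) ⁻¹' Set.Ioi 0 := rfl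
    rw [he]; exact measurable_subtype_coe measurableSet_Ioi
  have hub : ∀ x : I14,
      Set.indicator {x : I14 | 0 < x.1} (fun _ => ENNReal.ofReal (1/10)) x
        ≤ edist (w x) (u14 x) := by
    intro x
    by_cases hx : x ∈ {x : I14 | 0 < x.1}
    · rw [Set.indicator_of_mem hx]
      have h2 := hc x.1 x.2 hx
      rw [edist_Y14, u14_of_pos hx]
      have h4 : pt (⟨EuclideanSpace.single (0 : Fin 2) (1:ℝ), mem10⟩ : Y14)
          = EuclideanSpace.single (0 : Fin 2) (1:ℝ) := rfl
      rw [h4]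
      exact ENNReal.ofReal_le_ofReal (le_of_lt h2)
    · rw [Set.indicator_of_notMem hx]; exact zero_le
  have hint := lintegral_mono (μ := μ14) hub
  rw [lintegral_indicator hset, setLIntegral_const] at hint
  have himg : Subtype.val '' {x : I14 | 0 < x.1} = Set.Ioc (0:ℝ) 1 := by
    ext r
    constructor
    · rintro ⟨x, hx, rfl⟩; exact ⟨hx, x.2.2⟩
    · rintro ⟨h1, h2⟩; exact ⟨⟨r, ⟨by linarith, h2⟩⟩, h1, rfl⟩
  have hμ : μ14 {x : I14 | 0 < x.1} = 1 := by
    rw [μ14_apply]; erw [himg]; rw [Real.volume_Ioc]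
    norm_num
  rw [hμ, mul_one] at hint
  exact absurd (lt_of_le_of_lt hint h) (lt_irrefl _)

lemma euclid_zero_apply (i : Fin 2) : (0 : EuclideanSpace ℝ (Fin 2)) i = 0 := rfl

lemma single_apply_zero : (EuclideanSpace.single (0 : Fin 2) (1:ℝ)) 0 = 1 := by
  simp [EuclideanSpace.single_apply]

lemma single_apply_one : (EuclideanSpace.single (0 : Fin 2) (1:ℝ)) 1 = 0 := by
  simp [EuclideanSpace.single_apply]

lemma left_endpoint {q : EuclideanSpace ℝ (Fin 2)} (hq : q ∈ S14)
    (hd : dist q 0 ≤ 1/10) : q 0 = 0 ∧ q 1 ≤ 1/10 := by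
  have h1 : |q 1| ≤ 1/10 := by
    have h2 := coord_le_dist q 0 1
    rw [euclid_zero_apply, sub_zero] at h2
    linarith
  have h0 : |q 0| ≤ 1/10 := by
    have h2 := coord_le_dist q 0 0
    rw [euclid_zero_apply, sub_zero] at h2
    linarith
  rcases hq with ⟨h, _⟩ | ⟨h, _⟩ | ⟨h, _⟩
  · exact ⟨h, le_trans (le_abs_self _) h1⟩
  · exfalso; rw [h] at h1; rw [abs_one] at h1; linarith
  · exfalso; rw [h] at h0; rw [abs_one] at h0; linarith

lemma right_endpoint {q : EuclideanSpace ℝ (Fin 2)} (hq : q ∈ S14)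
    (hd : dist q (EuclideanSpace.single (0 : Fin 2) (1:ℝ)) ≤ 1/10) :
    q 0 = 1 ∧ q 1 ≤ 1/10 := by
  have h1 : |q 1| ≤ 1/10 := by
    have h2 := coord_le_dist q (EuclideanSpace.single (0 : Fin 2) (1:ℝ)) 1
    rw [single_apply_one, sub_zero] at h2
    linarith
  have h0 : |q 0 - 1| ≤ 1/10 := by
    have h2 := coord_le_dist q (EuclideanSpace.single (0 : Fin 2) (1:ℝ)) 0
    rw [single_apply_zero] at h2
    linarith
  rcases hq with ⟨h, _⟩ | ⟨h, _⟩ | ⟨h, _⟩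
  · exfalso; rw [h] at h0
    rcases abs_cases ((0:ℝ) - 1) with ⟨he, _⟩ | ⟨he, _⟩ <;> rw [he] at h0 <;> linarith
  · exfalso; rw [h, abs_one] at h1; linarith
  · exact ⟨h, le_trans (le_abs_self _) h1⟩

lemma near_left {p q : EuclideanSpace ℝ (Fin 2)} (hq : q ∈ S14) (h0 : p 0 = 0)
    (hy : p 1 < 1) (hd : dist q p < min (1 - p 1) 1) : q 0 = 0 := by
  have hmin := lt_min_iff.1 hd
  rcases hq with ⟨h, _⟩ | ⟨h, _⟩ | ⟨h, _⟩
  · exact h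
  · exfalso
    have h2 := coord_le_dist q p 1
    rw [h] at h2
    have h3 : 1 - p 1 ≤ dist q p := le_trans (le_abs_self _) h2
    linarith [hmin.1]
  · exfalso
    have h2 := coord_le_dist q p 0
    rw [h, h0, sub_zero, abs_one] at h2
    linarith [hmin.2]

lemma near_right {p q : EuclideanSpace ℝ (Fin 2)} (hq : q ∈ S14) (h0 : p 0 = 1)
    (hy : p 1 < 1) (hd : dist q p < min (1 - p 1) 1) : q 0 = 1 := by
  have hmin := lt_min_iff.1 hd
  rcases hq with ⟨h, _⟩ | ⟨h, _⟩ | ⟨h, _⟩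
  · exfalso
    have h2 := coord_le_dist q p 0
    rw [h, h0, zero_sub, abs_neg, abs_one] at h2
    linarith [hmin.2]
  · exfalso
    have h2 := coord_le_dist q p 1
    rw [h] at h2
    have h3 : 1 - p 1 ≤ dist q p := le_trans (le_abs_self _) h2
    linarith [hmin.1]
  · exact h


lemma main_bound {v : I14 → Y14} {g : I14 → ℝ≥0∞} (hug : IsUpperGradient v g)
    (hL1 : ∫⁻ x, edist (v x) (u14 x) ∂μ14 < ENNReal.ofReal (1/10)) :
    (14/5 : ℝ≥0∞) ≤ ∫⁻ x, g x ∂μ14 := by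
  by_cases hfin : ∫⁻ x, g x ∂μ14 = ⊤
  · rw [hfin]; exact le_top
  set V : ℝ → EuclideanSpace ℝ (Fin 2) := fun r => pt (v (toI r)) with hV
  have hVmem : ∀ r, V r ∈ S14 := fun r => pt_mem _
  have hVcont : ContinuousOn V (Set.Icc (-1:ℝ) 1) := cont_V hug hfin
  obtain ⟨a, hma, ha0, hda⟩ := exists_close_left hL1
  obtain ⟨b, hmb, hb0, hdb⟩ := exists_close_right hL1
  have hVa : V a = pt (v ⟨a, hma⟩) := by rw [hV]; simp only []; rw [toI_of_mem hma]
  have hVb : V b = pt (v ⟨b, hmb⟩) := by rw [hV]; simp only []; rw [toI_of_mem hmb]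
  have hVa0 : V a 0 = 0 ∧ V a 1 ≤ 1/10 := by
    apply left_endpoint (hVmem a)
    rw [hVa]; exact hda
  have hVb0 : V b 0 = 1 ∧ V b 1 ≤ 1/10 := by
    apply right_endpoint (hVmem b)
    rw [hVb]; exact hdb
  have hVnn : ∀ r, 0 ≤ V r 1 ∧ V r 1 ≤ 1 ∧ 0 ≤ V r 0 ∧ V r 0 ≤ 1 := by
    intro r
    obtain ⟨h1, h2⟩ := S14_coords (hVmem r)
    exact ⟨h2.1, h2.2, h1.1, h1.2⟩
  have hab : a < b := lt_of_le_of_lt ha0 hb0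
  have hJ : Set.Icc a b ⊆ Set.Icc (-1:ℝ) 1 := Set.Icc_subset_Icc hma.1 hmb.2
  have hfc : ContinuousOn (fun r => V r 0) (Set.Icc a b) :=
    (lip_eval 0).continuous.comp_continuousOn (hVcont.mono hJ)
  -- the time s1 at which the curve is at the upper-left corner (0,1)
  set S := Set.Icc a b ∩ (fun r => V r 0) ⁻¹' Set.Iic 0 with hSdef
  have hSclosed : IsClosed S :=
    hfc.preimage_isClosed_of_isClosed isClosed_Icc isClosed_Iic
  have hScpt : IsCompact S := isCompact_Icc.of_isClosed_subset hSclosed Set.inter_subset_left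
  have hSne : S.Nonempty := ⟨a, ⟨le_refl _, le_of_lt hab⟩, by
    show V a 0 ≤ 0; rw [hVa0.1]⟩
  set s1 := sSup S with hs1def
  have hs1S : s1 ∈ S := hScpt.sSup_mem hSne
  obtain ⟨⟨has1, hs1b⟩, hs1f'⟩ := hs1S
  have hs1f : V s1 0 ≤ 0 := hs1f'
  have hfs1 : V s1 0 = 0 := le_antisymm hs1f (hVnn s1).2.2.1
  have hs1mem : s1 ∈ Set.Icc (-1:ℝ) 1 := hJ ⟨has1, hs1b⟩
  have hone : V s1 1 = 1 := by
    by_contra hne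
    have hy : V s1 1 < 1 := lt_of_le_of_ne (hVnn s1).2.1 hne
    have hs1b' : s1 < b := by
      rcases eq_or_lt_of_le hs1b with he | hl
      · exfalso; rw [he] at hfs1; rw [hVb0.1] at hfs1; norm_num at hfs1
      · exact hl
    have hηpos : 0 < min (1 - V s1 1) 1 := lt_min (by linarith) one_pos
    have hcw := (hVcont s1 hs1mem)
    rw [Metric.continuousWithinAt_iff] at hcw
    obtain ⟨δ, hδpos, hδ⟩ := hcw _ hηpos
    set t := min b (s1 + δ/2) with ht
    have hts1 : s1 < t := lt_min hs1b' (by linarith)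
    have htb : t ≤ b := min_le_left _ _
    have htmem : t ∈ Set.Icc (-1:ℝ) 1 := hJ ⟨le_trans has1 (le_of_lt hts1), htb⟩
    have htd : dist t s1 < δ := by
      rw [Real.dist_eq, abs_of_pos (by linarith)]
      have h2 : t ≤ s1 + δ/2 := min_le_right _ _
      linarith
    have hd2 := hδ htmem htd
    have h20 : V t 0 = 0 := near_left (hVmem t) hfs1 hy hd2
    have hmemS : t ∈ S := ⟨⟨le_trans has1 (le_of_lt hts1), htb⟩, by
      show V t 0 ≤ 0; rw [h20]⟩
    have := le_csSup hScpt.bddAbove hmemS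
    rw [← hs1def] at this
    linarith
  -- the time t2 at which the curve is at the upper-right corner (1,1)
  have hsubT : Set.Icc s1 b ⊆ Set.Icc a b := Set.Icc_subset_Icc has1 (le_refl _)
  set T := Set.Icc s1 b ∩ (fun r => V r 0) ⁻¹' Set.Ici 1 with hTdef
  have hTclosed : IsClosed T :=
    (hfc.mono hsubT).preimage_isClosed_of_isClosed isClosed_Icc isClosed_Ici
  have hTcpt : IsCompact T := isCompact_Icc.of_isClosed_subset hTclosed Set.inter_subset_left
  have hTne : T.Nonempty := ⟨b, ⟨hs1b, le_refl _⟩, by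
    show (1:ℝ) ≤ V b 0; rw [hVb0.1]⟩
  set t2 := sInf T with ht2def
  have ht2T : t2 ∈ T := hTcpt.sInf_mem hTne
  obtain ⟨⟨hs1t2, ht2b⟩, ht2f'⟩ := ht2T
  have ht2f : (1:ℝ) ≤ V t2 0 := ht2f'
  have hft2 : V t2 0 = 1 := le_antisymm (hVnn t2).2.2.2 ht2f
  have ht2mem : t2 ∈ Set.Icc (-1:ℝ) 1 := hJ (hsubT ⟨hs1t2, ht2b⟩)
  have hs1t2' : s1 < t2 := by
    rcases eq_or_lt_of_le hs1t2 with he | hl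
    · exfalso; rw [← he, hfs1] at hft2; norm_num at hft2
    · exact hl
  have htwo : V t2 1 = 1 := by
    by_contra hne
    have hy : V t2 1 < 1 := lt_of_le_of_ne (hVnn t2).2.1 hne
    have hηpos : 0 < min (1 - V t2 1) 1 := lt_min (by linarith) one_pos
    have hcw := (hVcont t2 ht2mem)
    rw [Metric.continuousWithinAt_iff] at hcw
    obtain ⟨δ, hδpos, hδ⟩ := hcw _ hηpos
    set t := max s1 (t2 - δ/2) with ht
    have htt2 : t < t2 := max_lt hs1t2' (by linarith)
    have hs1t : s1 ≤ t := le_max_left _ _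
    have htb2 : t ≤ b := le_trans (le_of_lt htt2) ht2b
    have htmem : t ∈ Set.Icc (-1:ℝ) 1 := hJ ⟨le_trans has1 hs1t, htb2⟩
    have htd : dist t t2 < δ := by
      rw [Real.dist_eq, abs_of_neg (by linarith)]
      have h2 : t2 - δ/2 ≤ t := le_max_right _ _
      linarith
    have hd2 := hδ htmem htd
    have h20 : V t 0 = 1 := near_right (hVmem t) hft2 hy hd2
    have hmemT : t ∈ T := ⟨⟨hs1t, htb2⟩, by show (1:ℝ) ≤ V t 0; rw [h20]⟩
    have := csInf_le hTcpt.bddBelow hmemT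
    rw [← ht2def] at this
    linarith
  -- strict ordering
  have has1' : a < s1 := by
    rcases eq_or_lt_of_le has1 with he | hl
    · exfalso; rw [← he] at hone; linarith [hVa0.2]
    · exact hl
  have ht2b' : t2 < b := by
    rcases eq_or_lt_of_le ht2b with he | hl
    · exfalso; rw [he] at htwo; linarith [hVb0.2]
    · exact hl
  -- upper gradient estimates along the three pieces
  have e1 := ug_pair hug has1' hma hs1mem
  have e2 := ug_pair hug hs1t2' hs1mem ht2mem
  have e3 := ug_pair hug ht2b' ht2mem hmb
  have hVs1 : V s1 = pt (v ⟨s1, hs1mem⟩) := by rw [hV]; simp only []; rw [toI_of_mem hs1mem]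
  have hVt2 : V t2 = pt (v ⟨t2, ht2mem⟩) := by rw [hV]; simp only []; rw [toI_of_mem ht2mem]
  have l1 : ENNReal.ofReal (9/10) ≤ ∫⁻ r in Set.Icc a s1, extg g r := by
    refine le_trans ?_ e1
    rw [edist_Y14]
    apply ENNReal.ofReal_le_ofReal
    have h2 := coord_le_dist (pt (v ⟨s1, hs1mem⟩)) (pt (v ⟨a, hma⟩)) 1
    rw [← hVs1, ← hVa] at h2
    have h3 : (9:ℝ)/10 ≤ V s1 1 - V a 1 := by rw [hone]; linarith [hVa0.2]
    calc (9:ℝ)/10 ≤ V s1 1 - V a 1 := h3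
      _ ≤ |V s1 1 - V a 1| := le_abs_self _
      _ ≤ dist (pt (v ⟨s1, hs1mem⟩)) (pt (v ⟨a, hma⟩)) := by rw [← hVs1, ← hVa]; exact h2
  have l2 : ENNReal.ofReal 1 ≤ ∫⁻ r in Set.Icc s1 t2, extg g r := by
    refine le_trans ?_ e2
    rw [edist_Y14]
    apply ENNReal.ofReal_le_ofReal
    have h2 := coord_le_dist (pt (v ⟨t2, ht2mem⟩)) (pt (v ⟨s1, hs1mem⟩)) 0
    rw [← hVt2, ← hVs1] at h2
    have h3 : (1:ℝ) ≤ V t2 0 - V s1 0 := by rw [hft2, hfs1]; norm_num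
    calc (1:ℝ) ≤ V t2 0 - V s1 0 := h3
      _ ≤ |V t2 0 - V s1 0| := le_abs_self _
      _ ≤ dist (pt (v ⟨t2, ht2mem⟩)) (pt (v ⟨s1, hs1mem⟩)) := by rw [← hVt2, ← hVs1]; exact h2
  have l3 : ENNReal.ofReal (9/10) ≤ ∫⁻ r in Set.Icc t2 b, extg g r := by
    refine le_trans ?_ e3
    rw [edist_Y14]
    apply ENNReal.ofReal_le_ofReal
    have h2 := coord_le_dist (pt (v ⟨b, hmb⟩)) (pt (v ⟨t2, ht2mem⟩)) 1
    rw [← hVb, ← hVt2] at h2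
    have h3 : (9:ℝ)/10 ≤ V t2 1 - V b 1 := by rw [htwo]; linarith [hVb0.2]
    calc (9:ℝ)/10 ≤ V t2 1 - V b 1 := h3
      _ ≤ |V b 1 - V t2 1| := by rw [abs_sub_comm]; exact le_abs_self _
      _ ≤ dist (pt (v ⟨b, hmb⟩)) (pt (v ⟨t2, ht2mem⟩)) := by rw [← hVb, ← hVt2]; exact h2
  -- convert to half-open intervals and sum up
  have hc1 : ∫⁻ r in Set.Icc a s1, extg g r = ∫⁻ r in Set.Ioc a s1, extg g r :=
    (setLIntegral_congr Ioc_ae_eq_Icc).symm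
  have hc2 : ∫⁻ r in Set.Icc s1 t2, extg g r = ∫⁻ r in Set.Ioc s1 t2, extg g r :=
    (setLIntegral_congr Ioc_ae_eq_Icc).symm
  have hc3 : ∫⁻ r in Set.Icc t2 b, extg g r = ∫⁻ r in Set.Ioc t2 b, extg g r :=
    (setLIntegral_congr Ioc_ae_eq_Icc).symm
  have hsum : (∫⁻ r in Set.Ioc a s1, extg g r) + (∫⁻ r in Set.Ioc s1 t2, extg g r)
      + (∫⁻ r in Set.Ioc t2 b, extg g r) = ∫⁻ r in Set.Ioc a b, extg g r := by
    have hu1 : (∫⁻ r in Set.Ioc a s1, extg g r) + (∫⁻ r in Set.Ioc s1 t2, extg g r)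
        = ∫⁻ r in Set.Ioc a t2, extg g r := by
      rw [← Set.Ioc_union_Ioc_eq_Ioc (le_of_lt has1') (le_of_lt hs1t2'),
        lintegral_union measurableSet_Ioc (Set.Ioc_disjoint_Ioc_of_le le_rfl)]
    have hu2 : (∫⁻ r in Set.Ioc a t2, extg g r) + (∫⁻ r in Set.Ioc t2 b, extg g r)
        = ∫⁻ r in Set.Ioc a b, extg g r := by
      rw [← Set.Ioc_union_Ioc_eq_Ioc (le_of_lt (lt_trans has1' hs1t2')) (le_of_lt ht2b'),
        lintegral_union measurableSet_Ioc (Set.Ioc_disjoint_Ioc_of_le le_rfl)]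
    rw [hu1, hu2]
  have h145 : (14/5 : ℝ≥0∞) = ENNReal.ofReal (9/10) + ENNReal.ofReal 1
      + ENNReal.ofReal (9/10) := by
    rw [← ENNReal.ofReal_add (by norm_num) (by norm_num),
      ← ENNReal.ofReal_add (by norm_num) (by norm_num)]
    rw [show (9/10 + 1 + 9/10 : ℝ) = 14/5 by norm_num]
    rw [ENNReal.ofReal_div_of_pos (by norm_num)]
    norm_num
  calc (14/5 : ℝ≥0∞) = ENNReal.ofReal (9/10) + ENNReal.ofReal 1 + ENNReal.ofReal (9/10) := h145
    _ ≤ (∫⁻ r in Set.Icc a s1, extg g r) + (∫⁻ r in Set.Icc s1 t2, extg g r)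
        + (∫⁻ r in Set.Icc t2 b, extg g r) := add_le_add (add_le_add l1 l2) l3
    _ = ∫⁻ r in Set.Ioc a b, extg g r := by rw [hc1, hc2, hc3, hsum]
    _ ≤ ∫⁻ r in Set.Icc (-1:ℝ) 1, extg g r := by
        apply lintegral_mono_set
        intro r hr
        exact ⟨le_trans hma.1 (le_of_lt hr.1), le_trans hr.2 hmb.2⟩
    _ = ∫⁻ x, g x ∂μ14 := (lintegral_μ14 g).symm

/-- Any `L¹`-approximation of `u14` by `N^{1,1}` maps into the staple `Y14` has
energies with liminf at least `14/5`, while `‖D_AM u14‖(X) = 1`: the relaxed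
`BV` energy with respect to `N^{1,1}(X:Y)` strictly exceeds the AM-BV energy. -/
theorem statement14 :
    DAM μ14 u14 = 1 ∧
      ∀ (v : ℕ → I14 → Y14) (g : ℕ → I14 → ℝ≥0∞),
        (∀ k, MemL1 μ14 (v k) ∧ Measurable (g k) ∧ IsUpperGradient (v k) (g k)) →
        Tendsto (fun k => ∫⁻ x, edist (v k x) (u14 x) ∂μ14) atTop (nhds 0) →
          (14 / 5 : ℝ≥0∞) ≤ Filter.atTop.liminf fun k => ∫⁻ x, g k x ∂μ14 := by
  constructor
  · exact DAM_eq_one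
  · intro v g hk hconv
    refine Filter.le_liminf_of_le (by isBoundedDefault) ?_
    have hev : ∀ᶠ k in atTop, ∫⁻ x, edist (v k x) (u14 x) ∂μ14 < ENNReal.ofReal (1/10) :=
      hconv.eventually_lt_const (ENNReal.ofReal_pos.2 (by norm_num))
    filter_upwards [hev] with k hk1
    exact main_bound (hk k).2.2 hk1

end BVAMPaper
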